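/- Let C be a category with all finite limits and colimits which has splitting coproducts and disjoint coproducts. In the generalized cocore model structure, whose weak equivalences are W = {f : A ⟶ B | there exists some morphism B ⟶ A} and whose fibrations are Fib = (split monomorphisms).rlp, the pullback of a weak equivalence along a fibration is a weak equivalence: given any pullback square with sides w : B ⟶ Y in W and p : X ⟶ Y in Fib, the induced morphism Q ⟶ X opposite w lies in W (right properness). -/

import Mathlib

open CategoryTheory CategoryTheory.Limits

universe v u

section Preliminaries

variable {C : Type u} [Category.{v} C]

/-- The right lifting class of a class of morphisms. -/
def MorphismPropertyRLP (S : MorphismProperty C) : MorphismProperty C :=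
  fun _ _ g => ∀ ⦃A B : C⦄ (f : A ⟶ B), S f → HasLiftingProperty f g

/-- A category has splitting coproducts if every morphism into a binary coproduct
is, up to isomorphism, a coproduct of two morphisms. -/
def HasSplittingCoproducts (C : Type u) [Category.{v} C] [HasBinaryCoproducts C] : Prop :=
  ∀ ⦃X A B : C⦄ (f : X ⟶ A ⨿ B), ∃ (XL XR : C) (fL : XL ⟶ A) (fR : XR ⟶ B)
    (φ : XL ⨿ XR ≅ X), φ.hom ≫ f = coprod.map fL fR

end Preliminaries

/-- In a finitely bicomplete category with splitting and disjoint coproducts, the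
generalized cocore model structure is right proper: the pullback of a weak
equivalence along a fibration is a weak equivalence. -/
theorem generalizedCocore_rightProper
    {C : Type u} [Category.{v} C] [HasFiniteLimits C] [HasFiniteColimits C]
    (hsplit : HasSplittingCoproducts C) [∀ A B : C, BinaryCoproductDisjoint A B]
    (W Fib : MorphismProperty C)
    (hW : W = fun A B _ => Nonempty (B ⟶ A))
    (hFib : Fib = MorphismPropertyRLP (fun _ _ f => IsSplitMono f)) :
    ∀ ⦃Q X B Y : C⦄ (q : Q ⟶ X) (w' : Q ⟶ B) (p : X ⟶ Y) (w : B ⟶ Y),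
      IsPullback q w' p w → W w → Fib p → W q := by
  subst hW hFib
  intro Q X B Y q w' p w hpb hw hp
  obtain ⟨r⟩ := hw
  have hmono : IsSplitMono (coprod.inl : X ⟶ X ⨿ X) :=
    IsSplitMono.mk' ⟨coprod.desc (𝟙 X) (𝟙 X), coprod.inl_desc _ _⟩
  have hlift := hp (coprod.inl : X ⟶ X ⨿ X) hmono
  have sq : CommSq (𝟙 X) (coprod.inl : X ⟶ X ⨿ X) p (coprod.desc p (p ≫ r ≫ w)) :=
    ⟨by simpa using (coprod.inl_desc _ _).symm⟩
  obtain ⟨⟨l⟩⟩ := hlift.sq_hasLift sq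
  have hcomm : (coprod.inr ≫ l.l) ≫ p = (p ≫ r) ≫ w := by
    have := l.fac_right
    rw [Category.assoc, this]
    exact (coprod.inr_desc p (p ≫ r ≫ w)).trans (Category.assoc _ _ _).symm
  exact ⟨hpb.lift (coprod.inr ≫ l.l) (p ≫ r) hcomm⟩
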